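/- (Perturbation lemma.) Let ε < 0.3 and let F = (X_1, …, X_n) with X_i ∈ ℝ^{d×d_i} and n > d be an ε-nearly equal-norm Parseval matrix frame. Then there exists a tuple G = (Y_1, …, Y_n) with Y_i ∈ ℝ^{d×d_i} such that: (1) G is generic; (2) dist²(F, G) ≤ d·ε; and (3) G is a 4ε-nearly equal-norm Parseval matrix frame. -/

import Mathlib

open scoped BigOperators
open Matrix

namespace MFrames

/-- The squared Frobenius norm of a real matrix. -/
noncomputable def frobSq {α β : Type*} [Fintype α] [Fintype β] (X : Matrix α β ℝ) : ℝ :=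
  ∑ i, ∑ j, X i j ^ 2

variable {d n : ℕ} {m : Fin n → ℕ}

/-- Squared distance between two tuples of matrices. -/
noncomputable def dist2 (F G : ∀ i : Fin n, Matrix (Fin d) (Fin (m i)) ℝ) : ℝ :=
  ∑ i, frobSq (F i - G i)

/-- The frame operator `∑ Xᵢ Xᵢᵀ`. -/
noncomputable def frameOp (F : ∀ i : Fin n, Matrix (Fin d) (Fin (m i)) ℝ) :
    Matrix (Fin d) (Fin d) ℝ :=
  ∑ i, F i * (F i)ᵀ

/-- `F` is a matrix frame: `∑ Xᵢ Xᵢᵀ` is positive definite. -/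
def IsMatrixFrame (F : ∀ i : Fin n, Matrix (Fin d) (Fin (m i)) ℝ) : Prop :=
  (frameOp F).PosDef

/-- `F` is an ε-nearly equal-norm Parseval matrix frame. -/
def NearlyENParseval (ε : ℝ) (F : ∀ i : Fin n, Matrix (Fin d) (Fin (m i)) ℝ) : Prop :=
  (frameOp F - (1 - ε) • (1 : Matrix (Fin d) (Fin d) ℝ)).PosSemidef ∧
  ((1 + ε) • (1 : Matrix (Fin d) (Fin d) ℝ) - frameOp F).PosSemidef ∧
  ∀ i, (1 - ε) * ((d : ℝ) / n) ≤ frobSq (F i) ∧ frobSq (F i) ≤ (1 + ε) * ((d : ℝ) / n)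

/-- `F` is an equal-norm Parseval matrix frame. -/
def EqualNormParseval (F : ∀ i : Fin n, Matrix (Fin d) (Fin (m i)) ℝ) : Prop :=
  frameOp F = 1 ∧ ∀ i, frobSq (F i) = (d : ℝ) / n

/-- The columns of the concatenated matrix `[X₁ | … | Xₙ]`. -/
def col (F : ∀ i : Fin n, Matrix (Fin d) (Fin (m i)) ℝ) (p : (i : Fin n) × Fin (m i)) :
    Fin d → ℝ :=
  fun r => F p.1 r p.2

/-- `F` is generic: `n > d` and any `d` of the columns of `[X₁ | … | Xₙ]` are linearly
independent (hence a basis of `ℝ^d`). -/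
def Generic (F : ∀ i : Fin n, Matrix (Fin d) (Fin (m i)) ℝ) : Prop :=
  d < n ∧ ∀ S : Finset ((i : Fin n) × Fin (m i)), S.card = d →
    LinearIndependent ℝ (fun p : S => col F (p : (i : Fin n) × Fin (m i)))

/-- Column span of a matrix. -/
def colSpan {k : ℕ} (X : Matrix (Fin d) (Fin k) ℝ) : Submodule ℝ (Fin d → ℝ) :=
  Submodule.span ℝ (Set.range Xᵀ)

/-- The orbit polytope `K_F` of a tuple of matrices. -/
def orbitPolytope (F : ∀ i : Fin n, Matrix (Fin d) (Fin (m i)) ℝ) : Set (Fin n → ℝ) :=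
  {c | (∀ i, 0 ≤ c i) ∧ (∑ i, c i = d) ∧
    ∀ I : Finset (Fin n),
      ∑ i ∈ I, c i ≤ (Module.finrank ℝ ↥(⨆ i ∈ I, colSpan (F i)) : ℝ)}

/-- `Φ_F(t) = log det (∑ e^{tᵢ} Xᵢ Xᵢᵀ)`. -/
noncomputable def Phi (F : ∀ i : Fin n, Matrix (Fin d) (Fin (m i)) ℝ) (t : Fin n → ℝ) : ℝ :=
  Real.log (∑ i, Real.exp (t i) • (F i * (F i)ᵀ)).det

/-- The objective function `Φ_F(t) - ⟨t, c⟩` whose infimum over `t` is `f_F(c)`. -/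
noncomputable def obj (F : ∀ i : Fin n, Matrix (Fin d) (Fin (m i)) ℝ)
    (c : Fin n → ℝ) (t : Fin n → ℝ) : ℝ :=
  Phi F t - ∑ i, t i * c i

/-- `Δ_S` for `S ∈ 𝒜`, where `S` is encoded as a function `σ` assigning to each `i` a subset
`σ i ⊆ {1,…,dᵢ}` of the columns of `Xᵢ` (with `i ∈ S` iff `σ i ≠ ∅`). -/
noncomputable def Delta (F : ∀ i : Fin n, Matrix (Fin d) (Fin (m i)) ℝ)
    (σ : ∀ i : Fin n, Finset (Fin (m i))) : ℝ :=
  (∑ i, ∑ k ∈ σ i, Matrix.of (fun r s : Fin d => F i r k * F i s k)).det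

/-- The index set `𝒜`: collections of subsets of columns with `d` columns in total. -/
def indexA (d : ℕ) (m : Fin n → ℕ) : Finset (∀ i : Fin n, Finset (Fin (m i))) :=
  Finset.univ.filter fun σ => (∑ i, (σ i).card) = d

/-- Membership in the semialgebraic set `𝕍(F, c)`.  (Summing `(σ i).card • ⋯` over all of
`𝒜` is the same as summing `|Sᵢ| • ⋯` over those `S ∈ 𝒜` with `i ∈ S`.) -/
noncomputable def inVariety (F : ∀ i : Fin n, Matrix (Fin d) (Fin (m i)) ℝ)
    (c ξ : Fin n → ℝ) : Prop :=
  (∀ i, 0 < ξ i) ∧ ∀ i,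
    (∑ σ ∈ indexA d m, ((σ i).card : ℝ) * (∏ l, ξ l ^ (σ l).card) * Delta F σ)
      = c i * ∑ σ ∈ indexA d m, (∏ l, ξ l ^ (σ l).card) * Delta F σ

/-- `A` transforms `(F, c)` into a radial isotropic frame. -/
noncomputable def TransformsToRIF (F : ∀ i : Fin n, Matrix (Fin d) (Fin (m i)) ℝ)
    (c : Fin n → ℝ) (A : Matrix (Fin d) (Fin d) ℝ) : Prop :=
  ∑ i, (c i / frobSq (A * F i)) • ((A * F i) * (A * F i)ᵀ) = 1

/-- Columns of `X` all orthogonal to the subspace `T`, i.e. `Col(X) ⊆ T^⊥`. -/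
def colsPerp {k : ℕ} (X : Matrix (Fin d) (Fin k) ℝ) (T : Submodule ℝ (Fin d → ℝ)) : Prop :=
  ∀ x ∈ T, Xᵀ.mulVec x = 0

end MFrames

namespace MFrames


private lemma frobSq_nonneg' {α β : Type*} [Fintype α] [Fintype β] (X : Matrix α β ℝ) :
    0 ≤ frobSq X :=
  Finset.sum_nonneg fun _ _ => Finset.sum_nonneg fun _ _ => sq_nonneg _

private lemma quad_abs {d : ℕ} (M : Matrix (Fin d) (Fin d) ℝ) (x : Fin d → ℝ) :
    |x ⬝ᵥ (M *ᵥ x)| ≤ (∑ r, ∑ s, |M r s|) * (x ⬝ᵥ x) := by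
  have hsq : ∀ r, x r * x r ≤ x ⬝ᵥ x := fun r =>
    Finset.single_le_sum (f := fun i => x i * x i) (fun i _ => mul_self_nonneg _)
      (Finset.mem_univ r)
  have hxx : ∀ r s, |x r * x s| ≤ x ⬝ᵥ x := by
    intro r s
    have h1 := hsq r; have h2 := hsq s
    rw [abs_mul]
    nlinarith [sq_nonneg (|x r| - |x s|), abs_nonneg (x r), abs_nonneg (x s),
      sq_abs (x r), sq_abs (x s), abs_mul_abs_self (x r), abs_mul_abs_self (x s)]
  calc |x ⬝ᵥ (M *ᵥ x)| = |∑ r, ∑ s, x r * (M r s * x s)| := by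
        simp [dotProduct, Matrix.mulVec, Finset.mul_sum]
    _ ≤ ∑ r, ∑ s, |x r * (M r s * x s)| :=
        (Finset.abs_sum_le_sum_abs _ _).trans
          (Finset.sum_le_sum fun r _ => Finset.abs_sum_le_sum_abs _ _)
    _ ≤ ∑ r, ∑ s, |M r s| * (x ⬝ᵥ x) := by
        refine Finset.sum_le_sum fun r _ => Finset.sum_le_sum fun s _ => ?_
        have h : |x r * (M r s * x s)| = |M r s| * |x r * x s| := by
          rw [abs_mul, abs_mul, abs_mul]; ring
        rw [h]
        exact mul_le_mul_of_nonneg_left (hxx r s) (abs_nonneg _)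
    _ = (∑ r, ∑ s, |M r s|) * (x ⬝ᵥ x) := by
        rw [Finset.sum_mul]
        exact Finset.sum_congr rfl fun r _ => (Finset.sum_mul _ _ _).symm

private lemma psd_small {d : ℕ} (A B : Matrix (Fin d) (Fin d) ℝ) (hA : Aᵀ = A) (hB : Bᵀ = B)
    {c t : ℝ} (ht1 : |t| ≤ 1)
    (hb : |t| * ((∑ r, ∑ s, |A r s|) + (∑ r, ∑ s, |B r s|)) ≤ c) :
    (c • (1 : Matrix (Fin d) (Fin d) ℝ) + t • A + t ^ 2 • B).PosSemidef := by
  rw [Matrix.posSemidef_iff_dotProduct_mulVec]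
  constructor
  · rw [Matrix.IsHermitian, Matrix.conjTranspose_eq_transpose_of_trivial]
    simp [Matrix.transpose_add, Matrix.transpose_smul, hA, hB]
  · intro x
    have hx : star x = x := by funext i; exact star_trivial _
    rw [hx]
    have hq : x ⬝ᵥ ((c • (1 : Matrix (Fin d) (Fin d) ℝ) + t • A + t ^ 2 • B) *ᵥ x)
        = c * (x ⬝ᵥ x) + t * (x ⬝ᵥ (A *ᵥ x)) + t ^ 2 * (x ⬝ᵥ (B *ᵥ x)) := by
      simp [Matrix.add_mulVec, Matrix.smul_mulVec, dotProduct_add, dotProduct_smul,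
        smul_eq_mul, Matrix.one_mulVec]
    rw [hq]
    have hS : 0 ≤ x ⬝ᵥ x := Finset.sum_nonneg fun i _ => mul_self_nonneg _
    have hAq := quad_abs A x
    have hBq := quad_abs B x
    have hCA : 0 ≤ ∑ r, ∑ s, |A r s| :=
      Finset.sum_nonneg fun _ _ => Finset.sum_nonneg fun _ _ => abs_nonneg _
    have hCB : 0 ≤ ∑ r, ∑ s, |B r s| :=
      Finset.sum_nonneg fun _ _ => Finset.sum_nonneg fun _ _ => abs_nonneg _
    set CA := ∑ r, ∑ s, |A r s| with hCAdef
    set CB := ∑ r, ∑ s, |B r s| with hCBdef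
    have h1 : -(|t| * (CA * (x ⬝ᵥ x))) ≤ t * (x ⬝ᵥ (A *ᵥ x)) := by
      have h0 : |t * (x ⬝ᵥ (A *ᵥ x))| ≤ |t| * (CA * (x ⬝ᵥ x)) := by
        rw [abs_mul]; exact mul_le_mul_of_nonneg_left hAq (abs_nonneg _)
      linarith [neg_abs_le (t * (x ⬝ᵥ (A *ᵥ x)))]
    have h2 : -(|t| * (CB * (x ⬝ᵥ x))) ≤ t ^ 2 * (x ⬝ᵥ (B *ᵥ x)) := by
      have ht2 : t ^ 2 ≤ |t| := by nlinarith [sq_abs t, abs_nonneg t]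
      have e1 : t ^ 2 * |x ⬝ᵥ (B *ᵥ x)| ≤ |t| * (CB * (x ⬝ᵥ x)) :=
        (mul_le_mul_of_nonneg_right ht2 (abs_nonneg _)).trans
          (mul_le_mul_of_nonneg_left hBq (abs_nonneg _))
      have e2 : -(t ^ 2 * |x ⬝ᵥ (B *ᵥ x)|) ≤ t ^ 2 * (x ⬝ᵥ (B *ᵥ x)) := by
        nlinarith [neg_abs_le (x ⬝ᵥ (B *ᵥ x)), sq_nonneg t]
      linarith
    have h3 : |t| * (CA * (x ⬝ᵥ x)) + |t| * (CB * (x ⬝ᵥ x)) ≤ c * (x ⬝ᵥ x) := by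
      nlinarith [mul_le_mul_of_nonneg_right hb hS]
    linarith

private lemma posSemidef_add' {k : ℕ} {M N : Matrix (Fin k) (Fin k) ℝ}
    (hM : M.PosSemidef) (hN : N.PosSemidef) : (M + N).PosSemidef := by
  refine Matrix.PosSemidef.of_dotProduct_mulVec_nonneg (hM.1.add hN.1) fun x => ?_
  simp only [Matrix.add_mulVec, dotProduct_add]
  linarith [hM.dotProduct_mulVec_nonneg x, hN.dotProduct_mulVec_nonneg x]

open Polynomial in
private lemma eval_det_aux {k : ℕ} (P Q : Matrix (Fin k) (Fin k) ℝ) (t : ℝ) :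
    Polynomial.eval t
        ((P.map Polynomial.C + (Polynomial.X : Polynomial ℝ) • Q.map Polynomial.C).det)
      = (P + t • Q).det := by
  have h := RingHom.map_det (Polynomial.evalRingHom t)
    (P.map Polynomial.C + (Polynomial.X : Polynomial ℝ) • Q.map Polynomial.C)
  have h2 : ((P.map Polynomial.C + (Polynomial.X : Polynomial ℝ) • Q.map Polynomial.C).map
      (Polynomial.evalRingHom t)) = P + t • Q := by
    ext r c
    simp only [Matrix.map_apply, Matrix.add_apply, Matrix.smul_apply, smul_eq_mul,
      RingHom.coe_coe, Polynomial.coe_evalRingHom, Polynomial.eval_add, Polynomial.eval_mul,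
      Polynomial.eval_X, Polynomial.eval_C]
  rw [show Polynomial.eval t
      ((P.map Polynomial.C + (Polynomial.X : Polynomial ℝ) • Q.map Polynomial.C).det)
    = (Polynomial.evalRingHom t)
      ((P.map Polynomial.C + (Polynomial.X : Polynomial ℝ) • Q.map Polynomial.C).det) from rfl,
    h, RingHom.mapMatrix_apply, h2]

private lemma finite_det_zero {k : ℕ} (P Q : Matrix (Fin k) (Fin k) ℝ) (hQ : Q.det ≠ 0) :
    {t : ℝ | (P + t • Q).det = 0}.Finite := by
  classical
  set q : Polynomial ℝ :=
    (Q.map Polynomial.C + (Polynomial.X : Polynomial ℝ) • P.map Polynomial.C).det with hqdef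
  have hq0 : q.eval 0 = Q.det := by
    rw [hqdef, eval_det_aux Q P 0]; simp
  have hqne : q ≠ 0 := by
    intro h
    rw [h, Polynomial.eval_zero] at hq0
    exact hQ hq0.symm
  obtain ⟨s, hs⟩ := (((Polynomial.finite_setOf_isRoot hqne).union
    (Set.finite_singleton (0 : ℝ))).infinite_compl).nonempty
  rw [Set.mem_compl_iff, Set.mem_union, not_or] at hs
  obtain ⟨hsroot, hs0'⟩ := hs
  have hs0 : s ≠ 0 := by simpa using hs0'
  have hsdet : (Q + s • P).det ≠ 0 := by
    intro h
    exact hsroot (by simpa [Polynomial.IsRoot, hqdef, eval_det_aux Q P s] using h)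
  set p : Polynomial ℝ :=
    (P.map Polynomial.C + (Polynomial.X : Polynomial ℝ) • Q.map Polynomial.C).det with hpdef
  have hpne : p ≠ 0 := by
    intro h
    have he := eval_det_aux P Q s⁻¹
    rw [← hpdef, h, Polynomial.eval_zero] at he
    have hEq : P + s⁻¹ • Q = s⁻¹ • (Q + s • P) := by
      ext r c
      simp only [Matrix.add_apply, Matrix.smul_apply, smul_eq_mul]
      field_simp
      ring
    rw [hEq, Matrix.det_smul, Fintype.card_fin] at he
    exact (mul_ne_zero (pow_ne_zero _ (inv_ne_zero hs0)) hsdet) he.symm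
  refine (Polynomial.finite_setOf_isRoot hpne).subset fun t ht => ?_
  simp only [Set.mem_setOf_eq] at ht ⊢
  rw [Polynomial.IsRoot, ← hpdef] at *
  rw [hpdef, eval_det_aux]
  exact ht

private lemma mul_transpose_expand {d k : ℕ} (X W : Matrix (Fin d) (Fin k) ℝ) (t : ℝ) :
    (X + t • W) * (X + t • W)ᵀ
      = X * Xᵀ + t • (X * Wᵀ + W * Xᵀ) + t ^ 2 • (W * Wᵀ) := by
  rw [Matrix.transpose_add, Matrix.transpose_smul, Matrix.add_mul, Matrix.mul_add,
    Matrix.mul_add, Matrix.smul_mul, Matrix.smul_mul, Matrix.mul_smul, Matrix.mul_smul]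
  rw [pow_two]
  module

private lemma frobSq_expand {d k : ℕ} (X W : Matrix (Fin d) (Fin k) ℝ) (t : ℝ) :
    frobSq (X + t • W)
      = frobSq X + 2 * t * (∑ r, ∑ c, X r c * W r c) + t ^ 2 * frobSq W := by
  have h : ∀ r c, (X + t • W) r c ^ 2
      = X r c ^ 2 + 2 * t * (X r c * W r c) + t ^ 2 * W r c ^ 2 := by
    intro r c
    simp only [Matrix.add_apply, Matrix.smul_apply, smul_eq_mul]
    ring
  simp only [frobSq, h, Finset.sum_add_distrib, Finset.mul_sum]

private lemma dist2_perturb {d n : ℕ} {m : Fin n → ℕ}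
    (F Wf : ∀ i : Fin n, Matrix (Fin d) (Fin (m i)) ℝ) (t : ℝ) :
    dist2 F (fun i => F i + t • Wf i) = t ^ 2 * ∑ i, frobSq (Wf i) := by
  unfold dist2
  rw [Finset.mul_sum]
  refine Finset.sum_congr rfl fun i _ => ?_
  have h : F i - (F i + t • Wf i) = (-t) • Wf i := by module
  rw [h]
  simp [frobSq, Matrix.smul_apply, smul_eq_mul, mul_pow, neg_sq, Finset.mul_sum]

/-- **Perturbation lemma.**  Every `ε`-nearly equal-norm Parseval matrix frame (`ε < 0.3`,
`n > d`) can be perturbed to a tuple `G` such that `G` is generic, `dist²(F, G) ≤ d ε`, and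
`G` is a `4ε`-nearly equal-norm Parseval matrix frame. -/
theorem perturbation_lemma {d n : ℕ} (hd : 0 < d) (hdn : d < n) {m : Fin n → ℕ}
    {ε : ℝ} (hε0 : 0 < ε) (hε : ε < 0.3)
    (F : ∀ i : Fin n, Matrix (Fin d) (Fin (m i)) ℝ)
    (hF : NearlyENParseval ε F) :
    ∃ G : ∀ i : Fin n, Matrix (Fin d) (Fin (m i)) ℝ,
      Generic G ∧ dist2 F G ≤ (d : ℝ) * ε ∧ NearlyENParseval (4 * ε) G := by
  classical
  obtain ⟨hlow, hup, hnorm⟩ := hF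
  have hn0 : 0 < n := lt_of_le_of_lt (Nat.zero_le d) hdn
  have hdR : (0 : ℝ) < d := by exact_mod_cast hd
  have hnR : (0 : ℝ) < n := by exact_mod_cast hn0
  -- distinct labels for all columns
  let e := Fintype.equivFin ((i : Fin n) × Fin (m i))
  let x : ((i : Fin n) × Fin (m i)) → ℝ := fun p => ((e p : ℕ) : ℝ)
  have hxinj : Function.Injective x := by
    intro p q h
    exact e.injective (Fin.val_injective (Nat.cast_injective h))
  -- the perturbation direction
  let Wf : ∀ i : Fin n, Matrix (Fin d) (Fin (m i)) ℝ :=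
    fun i => Matrix.of fun r k => x ⟨i, k⟩ ^ (r : ℕ)
  let Am : Matrix (Fin d) (Fin d) ℝ := ∑ i, (F i * (Wf i)ᵀ + Wf i * (F i)ᵀ)
  let Bm : Matrix (Fin d) (Fin d) ℝ := ∑ i, Wf i * (Wf i)ᵀ
  let ip : Fin n → ℝ := fun i => ∑ r, ∑ c, F i r c * Wf i r c
  let CA : ℝ := ∑ r, ∑ s, |Am r s|
  let CB : ℝ := ∑ r, ∑ s, |Bm r s|
  let SW : ℝ := ∑ i, frobSq (Wf i)
  let SN : ℝ := ∑ i, (2 * |ip i| + frobSq (Wf i))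
  let K : ℝ := 1 + CA + CB + SW + SN
  have hCA0 : 0 ≤ CA :=
    Finset.sum_nonneg fun _ _ => Finset.sum_nonneg fun _ _ => abs_nonneg _
  have hCB0 : 0 ≤ CB :=
    Finset.sum_nonneg fun _ _ => Finset.sum_nonneg fun _ _ => abs_nonneg _
  have hSW0 : 0 ≤ SW := Finset.sum_nonneg fun i _ => frobSq_nonneg' _
  have hterm0 : ∀ i, 0 ≤ 2 * |ip i| + frobSq (Wf i) := fun i =>
    add_nonneg (by positivity) (frobSq_nonneg' _)
  have hSN0 : 0 ≤ SN := Finset.sum_nonneg fun i _ => hterm0 i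
  have hK0 : 0 < K := by
    have : (1 : ℝ) ≤ K := by simp only [K]; linarith
    linarith
  let ε₀ : ℝ := min (3 * ε) (min (3 * ε * ((d : ℝ) / n)) ((d : ℝ) * ε))
  have hε₀ : 0 < ε₀ := by
    have h1 : (0 : ℝ) < 3 * ε := by linarith
    have h2 : (0 : ℝ) < 3 * ε * ((d : ℝ) / n) := by positivity
    have h3 : (0 : ℝ) < (d : ℝ) * ε := by positivity
    exact lt_min h1 (lt_min h2 h3)
  let δ : ℝ := min 1 (ε₀ / K)
  have hδ0 : 0 < δ := lt_min one_pos (div_pos hε₀ hK0)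
  -- the finitely many bad parameters
  let ST := {S : Finset ((i : Fin n) × Fin (m i)) // S.card = d}
  let eS : ∀ S : ST, Fin d ≃ {y // y ∈ S.1} := fun S => (Finset.equivFinOfCardEq S.2).symm
  let Pm : ST → Matrix (Fin d) (Fin d) ℝ := fun S => Matrix.of fun j c => col F (eS S j) c
  let Qm : ST → Matrix (Fin d) (Fin d) ℝ := fun S => Matrix.of fun j c => col Wf (eS S j) c
  have hQdet : ∀ S, (Qm S).det ≠ 0 := by
    intro S
    have hQm : Qm S = Matrix.vandermonde (fun j => x ((eS S j : ((i : Fin n) × Fin (m i))))) := by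
      ext j c
      show col Wf (eS S j) c = _
      simp only [col, Matrix.vandermonde]
      show Wf (eS S j : ((i : Fin n) × Fin (m i))).1 c (eS S j : ((i : Fin n) × Fin (m i))).2 = _
      simp only [Wf, Matrix.of_apply]
    rw [hQm]
    refine Matrix.det_vandermonde_ne_zero_iff.mpr ?_
    intro j1 j2 h
    exact (eS S).injective (Subtype.val_injective (hxinj h))
  have hbadfin : (⋃ S : ST, {t : ℝ | (Pm S + t • Qm S).det = 0}).Finite :=
    Set.finite_iUnion fun S => finite_det_zero _ _ (hQdet S)
  obtain ⟨t, htmem⟩ := ((Set.Ioo_infinite hδ0).diff hbadfin).nonempty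
  obtain ⟨htIoo, htbad⟩ := htmem
  obtain ⟨ht0, htδ⟩ := htIoo
  have ht1 : t ≤ 1 := le_trans htδ.le (min_le_left _ _)
  have htK : t * K ≤ ε₀ := by
    have h : t ≤ ε₀ / K := le_trans htδ.le (min_le_right _ _)
    calc t * K ≤ (ε₀ / K) * K := mul_le_mul_of_nonneg_right h hK0.le
    _ = ε₀ := div_mul_cancel₀ _ (ne_of_gt hK0)
  have ht3ε : t * (CA + CB) ≤ 3 * ε := by
    have h1 : t * (CA + CB) ≤ t * K := by
      refine mul_le_mul_of_nonneg_left ?_ ht0.le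
      simp only [K]; linarith
    have h2 : ε₀ ≤ 3 * ε := min_le_left _ _
    linarith
  have htn : t * K ≤ 3 * ε * ((d : ℝ) / n) :=
    le_trans htK (le_trans (min_le_right _ _) (min_le_left _ _))
  have htd : t * K ≤ (d : ℝ) * ε :=
    le_trans htK (le_trans (min_le_right _ _) (min_le_right _ _))
  -- frame operator expansion
  have hGop : frameOp (fun i => F i + t • Wf i) = frameOp F + t • Am + t ^ 2 • Bm := by
    unfold frameOp
    simp only [mul_transpose_expand]
    rw [Finset.sum_add_distrib, Finset.sum_add_distrib, ← Finset.smul_sum, ← Finset.smul_sum]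
  have hAmT : Amᵀ = Am := by
    show (∑ i, (F i * (Wf i)ᵀ + Wf i * (F i)ᵀ))ᵀ = _
    rw [Matrix.transpose_sum]
    refine Finset.sum_congr rfl fun i _ => ?_
    rw [Matrix.transpose_add, Matrix.transpose_mul, Matrix.transpose_mul,
      Matrix.transpose_transpose, Matrix.transpose_transpose, add_comm]
  have hBmT : Bmᵀ = Bm := by
    show (∑ i, Wf i * (Wf i)ᵀ)ᵀ = _
    rw [Matrix.transpose_sum]
    refine Finset.sum_congr rfl fun i _ => ?_
    rw [Matrix.transpose_mul, Matrix.transpose_transpose]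
  have habs : |t| = t := abs_of_pos ht0
  refine ⟨fun i => F i + t • Wf i, ⟨hdn, fun S hS => ?_⟩, ?_, ?_, ?_, fun i => ?_⟩
  · -- genericity
    set S' : ST := ⟨S, hS⟩ with hS'def
    have hdet : (Pm S' + t • Qm S').det ≠ 0 := by
      intro h
      exact htbad (Set.mem_iUnion.mpr ⟨S', h⟩)
    have hunit : IsUnit (Pm S' + t • Qm S') :=
      (Matrix.isUnit_iff_isUnit_det _).mpr (isUnit_iff_ne_zero.mpr hdet)
    have hLI := Matrix.linearIndependent_rows_iff_isUnit.mpr hunit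
    have hM : ∀ j : Fin d, (Pm S' + t • Qm S') j
        = col (fun i => F i + t • Wf i) ((eS S' j : ((i : Fin n) × Fin (m i)))) := by
      intro j
      funext c
      show (Pm S' + t • Qm S') j c = _
      simp only [Matrix.add_apply, Matrix.smul_apply, smul_eq_mul, Pm, Qm, Matrix.of_apply]
      simp [col, Matrix.add_apply, Matrix.smul_apply, smul_eq_mul]
    rw [funext hM] at hLI
    exact (linearIndependent_equiv (eS S')).mp hLI
  · -- distance
    rw [dist2_perturb]
    have hgoal : t ^ 2 * SW ≤ (d : ℝ) * ε := by
      have h1 : t ^ 2 * SW ≤ t * SW := by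
        nlinarith [mul_nonneg (mul_nonneg ht0.le (sub_nonneg.mpr ht1)) hSW0]
      have h2 : t * SW ≤ t * K := by
        refine mul_le_mul_of_nonneg_left ?_ ht0.le
        simp only [K]; linarith
      linarith
    exact hgoal
  · -- lower Loewner bound
    have hdecomp : frameOp (fun i => F i + t • Wf i)
          - (1 - 4 * ε) • (1 : Matrix (Fin d) (Fin d) ℝ)
        = (frameOp F - (1 - ε) • (1 : Matrix (Fin d) (Fin d) ℝ))
          + ((3 * ε) • (1 : Matrix (Fin d) (Fin d) ℝ) + t • Am + t ^ 2 • Bm) := by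
      rw [hGop]; module
    rw [hdecomp]
    refine posSemidef_add' hlow (psd_small Am Bm hAmT hBmT ?_ ?_)
    · rw [habs]; exact ht1
    · rw [habs]; exact ht3ε
  · -- upper Loewner bound
    have hdecomp : (1 + 4 * ε) • (1 : Matrix (Fin d) (Fin d) ℝ)
          - frameOp (fun i => F i + t • Wf i)
        = ((1 + ε) • (1 : Matrix (Fin d) (Fin d) ℝ) - frameOp F)
          + ((3 * ε) • (1 : Matrix (Fin d) (Fin d) ℝ) + t • (-Am) + t ^ 2 • (-Bm)) := by
      rw [hGop]; module
    rw [hdecomp]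
    refine posSemidef_add' hup (psd_small (-Am) (-Bm) ?_ ?_ ?_ ?_)
    · rw [Matrix.transpose_neg, hAmT]
    · rw [Matrix.transpose_neg, hBmT]
    · rw [habs]; exact ht1
    · rw [habs]
      have e1 : (∑ r, ∑ s, |(-Am) r s|) = CA := by
        simp [Matrix.neg_apply]; rfl
      have e2 : (∑ r, ∑ s, |(-Bm) r s|) = CB := by
        simp [Matrix.neg_apply]; rfl
      rw [e1, e2]; exact ht3ε
  · -- norms
    obtain ⟨hni1, hni2⟩ := hnorm i
    have hfe : frobSq (F i + t • Wf i)
        = frobSq (F i) + 2 * t * ip i + t ^ 2 * frobSq (Wf i) := frobSq_expand _ _ _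
    have hb : |2 * t * ip i + t ^ 2 * frobSq (Wf i)| ≤ 3 * ε * ((d : ℝ) / n) := by
      have h1 : |2 * t * ip i + t ^ 2 * frobSq (Wf i)|
          ≤ 2 * t * |ip i| + t ^ 2 * frobSq (Wf i) := by
        refine (abs_add_le _ _).trans ?_
        have e1 : |2 * t * ip i| = 2 * t * |ip i| := by
          rw [abs_mul, abs_of_pos (by linarith : (0 : ℝ) < 2 * t)]
        have e2 : |t ^ 2 * frobSq (Wf i)| = t ^ 2 * frobSq (Wf i) :=
          abs_of_nonneg (mul_nonneg (sq_nonneg _) (frobSq_nonneg' _))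
        rw [e1, e2]
      have h2 : 2 * t * |ip i| + t ^ 2 * frobSq (Wf i)
          ≤ t * (2 * |ip i| + frobSq (Wf i)) := by
        nlinarith [mul_nonneg (mul_nonneg ht0.le (sub_nonneg.mpr ht1)) (frobSq_nonneg' (Wf i)),
          abs_nonneg (ip i)]
      have h3 : 2 * |ip i| + frobSq (Wf i) ≤ SN :=
        Finset.single_le_sum (f := fun i => 2 * |ip i| + frobSq (Wf i))
          (fun j _ => hterm0 j) (Finset.mem_univ i)
      have h4 : t * (2 * |ip i| + frobSq (Wf i)) ≤ t * K := by
        refine mul_le_mul_of_nonneg_left ?_ ht0.le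
        simp only [K]; linarith
      exact h1.trans (h2.trans (h4.trans htn))
    obtain ⟨hb1, hb2⟩ := abs_le.mp hb
    constructor
    · have e : (1 - 4 * ε) * ((d : ℝ) / n)
          = (1 - ε) * ((d : ℝ) / n) - 3 * ε * ((d : ℝ) / n) := by ring
      rw [hfe]
      rw [e] at *
      linarith
    · have e : (1 + 4 * ε) * ((d : ℝ) / n)
          = (1 + ε) * ((d : ℝ) / n) + 3 * ε * ((d : ℝ) / n) := by ring
      rw [hfe]
      rw [e] at *
      linarith



end MFrames
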